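/- Let θ⁰, θ₂^∞, θ₃^∞ ∈ ℂ with 2θ⁰+θ₂^∞+θ₃^∞ = 0. Let I ⊆ ℝ be an open interval with 0 ∉ I and let q₁,q₂,p₁,p₂,u : I → ℂ be differentiable with u(t) ≠ 0. Define Q(t) = [[q₁, u],[−q₂/u, q₁]], P(t) = [[p₁/2, −p₂u],[(p₂q₂−θ⁰−θ₂^∞)/u, p₁/2]]. Define A₀(t) = t·(O₂; I₂)·(P, I₂), A₁(t) = [[QP, Q],[I, −PQ+θ⁰]], A₂ = [[O, I],[O, O]], B₀(t) = −(1/t)[[O, Q],[O, O]], B₁(t) = −(O₂; I₂)·(P, I₂), and A(x,t) = A₀/x² + A₁/x + A₂, B(x,t) = B₀ + B₁/x. Then the zero-curvature equation ∂A/∂t − ∂B/∂x + [A, B] = O holds for all t ∈ I and all x ∈ ℂ ∖ {0} if and only if tQ′ = 2QPQ − θ⁰Q + t and tP′ = −2PQP + θ⁰P − 1 hold on I. -/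

import Mathlib

/-!
The Lax pair of spectral type (11)₂,(2)(2) (singularity pattern 3/2+2):
the zero-curvature equation is equivalent to the matrix Painlevé III(D₇) system
`tQ′ = 2QPQ − θ⁰Q + t`, `tP′ = −2PQP + θ⁰P − 1`.
-/

open Matrix

noncomputable section

/-- Entrywise derivative of a matrix-valued function of a real variable. -/
def matDeriv {m n : Type*} (F : ℝ → Matrix m n ℂ) (t : ℝ) : Matrix m n ℂ :=
  Matrix.of fun i j => deriv (fun s => F s i j) t

/-- `Q = [[q₁, u],[−q₂/u, q₁]]`. -/
def Qf (q1 q2 u : ℝ → ℂ) (t : ℝ) : Matrix (Fin 2) (Fin 2) ℂ :=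
  !![q1 t, u t; -(q2 t)/(u t), q1 t]

/-- `P = [[p₁/2, −p₂u],[(p₂q₂−θ)/u, p₁/2]]`. -/
def Pf (p1 p2 q2 : ℝ → ℂ) (θ : ℂ) (u : ℝ → ℂ) (t : ℝ) : Matrix (Fin 2) (Fin 2) ℂ :=
  !![p1 t/2, -(p2 t)*(u t); ((p2 t)*(q2 t) - θ)/(u t), p1 t/2]

/-- `A₀(t) = t·(O₂; I₂)·(P, I₂)`. -/
def A0f (P : Matrix (Fin 2) (Fin 2) ℂ) (t : ℂ) : Matrix (Fin 2 ⊕ Fin 2) (Fin 2 ⊕ Fin 2) ℂ :=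
  t • (fromRows (0 : Matrix (Fin 2) (Fin 2) ℂ) (1 : Matrix (Fin 2) (Fin 2) ℂ) *
    fromCols P (1 : Matrix (Fin 2) (Fin 2) ℂ))

/-- `A₁(t) = [[QP, Q],[I, −PQ+θ⁰]]`. -/
def A1f (θ0 : ℂ) (Q P : Matrix (Fin 2) (Fin 2) ℂ) : Matrix (Fin 2 ⊕ Fin 2) (Fin 2 ⊕ Fin 2) ℂ :=
  fromBlocks (Q * P) Q 1 (-(P * Q) + θ0 • (1 : Matrix (Fin 2) (Fin 2) ℂ))

/-- `A₂ = [[O, I],[O, O]]`. -/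
def A2c : Matrix (Fin 2 ⊕ Fin 2) (Fin 2 ⊕ Fin 2) ℂ := fromBlocks 0 1 0 0

/-- `B₀(t) = −(1/t)[[O, Q],[O, O]]`. -/
def B0f (Q : Matrix (Fin 2) (Fin 2) ℂ) (t : ℂ) : Matrix (Fin 2 ⊕ Fin 2) (Fin 2 ⊕ Fin 2) ℂ :=
  -(t⁻¹ • fromBlocks 0 Q 0 0)

/-- `B₁(t) = −(O₂; I₂)·(P, I₂)`. -/
def B1f (P : Matrix (Fin 2) (Fin 2) ℂ) : Matrix (Fin 2 ⊕ Fin 2) (Fin 2 ⊕ Fin 2) ℂ :=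
  -(fromRows (0 : Matrix (Fin 2) (Fin 2) ℂ) (1 : Matrix (Fin 2) (Fin 2) ℂ) *
    fromCols P (1 : Matrix (Fin 2) (Fin 2) ℂ))

/-- `A(x,t) = A₀/x² + A₁/x + A₂`. -/
def Afun (θ0 : ℂ) (Q P : ℝ → Matrix (Fin 2) (Fin 2) ℂ) (x : ℂ) (t : ℝ) :
    Matrix (Fin 2 ⊕ Fin 2) (Fin 2 ⊕ Fin 2) ℂ :=
  (x ^ 2)⁻¹ • A0f (P t) (t : ℂ) + x⁻¹ • A1f θ0 (Q t) (P t) + A2c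

/-- `B(x,t) = B₀ + B₁/x`. -/
def Bfun (Q P : ℝ → Matrix (Fin 2) (Fin 2) ℂ) (x : ℂ) (t : ℝ) :
    Matrix (Fin 2 ⊕ Fin 2) (Fin 2 ⊕ Fin 2) ℂ :=
  B0f (Q t) (t : ℂ) + x⁻¹ • B1f (P t)

/-! ### Auxiliary material for the proof -/

abbrev Mat2 := Matrix (Fin 2) (Fin 2) ℂ

section LaxAux

variable {m n k : Type*}

lemma matDeriv_fromBlocks (A : ℝ → Matrix m n ℂ) (B : ℝ → Matrix m k ℂ)
    (C : ℝ → Matrix k n ℂ) (D : ℝ → Matrix k k ℂ) (t : ℝ) :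
    matDeriv (fun s => fromBlocks (A s) (B s) (C s) (D s)) t
      = fromBlocks (matDeriv A t) (matDeriv B t) (matDeriv C t) (matDeriv D t) := by
  ext (i|i) (j|j) <;> simp [matDeriv, fromBlocks]

lemma matDeriv_mul [Fintype n] [DecidableEq n] (F G : ℝ → Matrix n n ℂ) (t : ℝ)
    (hF : ∀ i j, DifferentiableAt ℝ (fun s => F s i j) t)
    (hG : ∀ i j, DifferentiableAt ℝ (fun s => G s i j) t) :
    matDeriv (fun s => F s * G s) t = matDeriv F t * G t + F t * matDeriv G t := by
  ext i j
  simp only [matDeriv, Matrix.mul_apply, Matrix.add_apply, Matrix.of_apply]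
  rw [deriv_fun_sum (fun k _ => ((hF i k).fun_mul (hG k j)))]
  simp only [deriv_fun_mul (hF i _) (hG _ j)]
  rw [Finset.sum_add_distrib]

lemma matDeriv_const (M : Matrix m n ℂ) (t : ℝ) :
    matDeriv (fun _ : ℝ => M) t = 0 := by ext i j; simp [matDeriv]

lemma matDeriv_neg (F : ℝ → Matrix m n ℂ) (t : ℝ) :
    matDeriv (fun s => -(F s)) t = -(matDeriv F t) := by
  ext i j; simp [matDeriv, deriv.neg]

lemma matDeriv_add (F G : ℝ → Matrix m n ℂ) (t : ℝ)
    (hF : ∀ i j, DifferentiableAt ℝ (fun s => F s i j) t)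
    (hG : ∀ i j, DifferentiableAt ℝ (fun s => G s i j) t) :
    matDeriv (fun s => F s + G s) t = matDeriv F t + matDeriv G t := by
  ext i j; simp [matDeriv, deriv_fun_add (hF i j) (hG i j)]

lemma matDeriv_add_const (F : ℝ → Matrix m n ℂ) (M : Matrix m n ℂ) (t : ℝ) :
    matDeriv (fun s => F s + M) t = matDeriv F t := by
  ext i j; simp [matDeriv, deriv_add_const]

lemma matDeriv_smul (c : ℂ) (F : ℝ → Matrix m n ℂ) (t : ℝ) :
    matDeriv (fun s => c • F s) t = c • matDeriv F t := by
  ext i j; simp [matDeriv, deriv_const_mul_field]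

lemma hasDerivAt_ofReal' (t : ℝ) : HasDerivAt (fun s : ℝ => (s:ℂ)) 1 t := by
  simpa using (hasDerivAt_id t).ofReal_comp

lemma matDeriv_ofReal_smul (F : ℝ → Matrix m n ℂ) (t : ℝ)
    (hF : ∀ i j, DifferentiableAt ℝ (fun s => F s i j) t) :
    matDeriv (fun s => (s:ℂ) • F s) t = F t + (t:ℂ) • matDeriv F t := by
  ext i j
  simp only [matDeriv, Matrix.smul_apply, Matrix.add_apply, Matrix.of_apply, smul_eq_mul]
  rw [((hasDerivAt_ofReal' t).fun_mul ((hF i j).hasDerivAt)).deriv]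
  simp

lemma diffAt_mul_entry [Fintype n] (F G : ℝ → Matrix n n ℂ) (t : ℝ)
    (hF : ∀ i j, DifferentiableAt ℝ (fun s => F s i j) t)
    (hG : ∀ i j, DifferentiableAt ℝ (fun s => G s i j) t) (i j : n) :
    DifferentiableAt ℝ (fun s => (F s * G s) i j) t := by
  simp only [Matrix.mul_apply]
  exact DifferentiableAt.fun_sum fun k _ => (hF i k).fun_mul (hG k j)

lemma diffAt_fromBlocks_entry (A : ℝ → Matrix m n ℂ) (B : ℝ → Matrix m k ℂ)
    (C : ℝ → Matrix k n ℂ) (D : ℝ → Matrix k k ℂ) (t : ℝ)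
    (hA : ∀ i j, DifferentiableAt ℝ (fun s => A s i j) t)
    (hB : ∀ i j, DifferentiableAt ℝ (fun s => B s i j) t)
    (hC : ∀ i j, DifferentiableAt ℝ (fun s => C s i j) t)
    (hD : ∀ i j, DifferentiableAt ℝ (fun s => D s i j) t) :
    ∀ i j, DifferentiableAt ℝ (fun s => fromBlocks (A s) (B s) (C s) (D s) i j) t := by
  rintro (i|i) (j|j) <;> simp [fromBlocks] <;> [exact hA i j; exact hB i j; exact hC i j;
    exact hD i j]

lemma A0f_eq (P : Mat2) (t : ℂ) : A0f P t = t • fromBlocks 0 0 P 1 := by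
  rw [A0f, fromRows_mul_fromCols]; simp

lemma B1f_eq (P : Mat2) : B1f P = -fromBlocks 0 0 P 1 := by
  rw [B1f, fromRows_mul_fromCols]; simp

set_option maxHeartbeats 1000000 in
lemma rhs_red (θ0 t x : ℂ) (ht : t ≠ 0) (hx : x ≠ 0) (Q P : Mat2) :
    -((x ^ 2)⁻¹ • B1f P)
      - (((x ^ 2)⁻¹ • A0f P t + x⁻¹ • A1f θ0 Q P + A2c) * (B0f Q t + x⁻¹ • B1f P)
         - (B0f Q t + x⁻¹ • B1f P) * ((x ^ 2)⁻¹ • A0f P t + x⁻¹ • A1f θ0 Q P + A2c))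
    = (x ^ 2)⁻¹ • fromBlocks 0 0 (P - (2:ℂ) • (P*Q*P) + θ0 • P - 1) 1
      + x⁻¹ • fromBlocks (P - t⁻¹ • Q) (t⁻¹ • ((2:ℂ) • (Q*P*Q) - θ0 • Q) + 1) 0
          (t⁻¹ • Q - P) := by
  rw [A0f_eq, B1f_eq, A1f, A2c, B0f]
  simp only [sub_eq_add_neg, neg_neg, fromBlocks_smul, fromBlocks_neg, fromBlocks_add,
    fromBlocks_multiply, smul_zero, neg_zero, add_zero, zero_add]
  rw [fromBlocks_inj]
  refine ⟨?_, ?_, ?_, ?_⟩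
  all_goals
    simp only [Matrix.mul_add, Matrix.add_mul, Matrix.neg_mul, Matrix.mul_neg,
      smul_mul_assoc, mul_smul_comm, Matrix.mul_one, Matrix.one_mul, Matrix.mul_zero,
      Matrix.zero_mul, mul_assoc, smul_smul, neg_zero, add_zero, zero_add, smul_zero,
      neg_neg, neg_add]
  all_goals match_scalars
  all_goals try field_simp
  all_goals try field_simp
  all_goals try rw [div_eq_iff (by simp [mul_ne_zero_iff, pow_ne_zero_iff, hx, ht])]
  all_goals ring

lemma lhs_red (θ0 : ℂ) (Q P : ℝ → Mat2) (x : ℂ) (t : ℝ)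
    (hQd : ∀ i j, DifferentiableAt ℝ (fun s => Q s i j) t)
    (hPd : ∀ i j, DifferentiableAt ℝ (fun s => P s i j) t) :
    matDeriv (fun s => (x ^ 2)⁻¹ • ((s:ℂ) • fromBlocks 0 0 (P s) (1:Mat2))
        + x⁻¹ • A1f θ0 (Q s) (P s) + A2c) t
      = (x ^ 2)⁻¹ • fromBlocks 0 0 (P t + (t:ℂ) • matDeriv P t) 1
        + x⁻¹ • fromBlocks (matDeriv Q t * P t + Q t * matDeriv P t) (matDeriv Q t) 0
            (-(matDeriv P t * Q t + P t * matDeriv Q t)) := by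
  have hFB := diffAt_fromBlocks_entry (fun _ => (0:Mat2)) (fun _ => (0:Mat2)) P
    (fun _ => (1:Mat2)) t (fun _ _ => differentiableAt_const _)
    (fun _ _ => differentiableAt_const _) hPd (fun _ _ => differentiableAt_const _)
  have hA1e := diffAt_fromBlocks_entry (fun s => Q s * P s) Q (fun _ => (1:Mat2))
    (fun s => -(P s * Q s) + θ0 • (1:Mat2)) t
    (diffAt_mul_entry Q P t hQd hPd) hQd (fun _ _ => differentiableAt_const _)
    (fun i j => by
      simp only [Matrix.add_apply, Matrix.neg_apply, Matrix.smul_apply]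
      exact ((diffAt_mul_entry P Q t hPd hQd i j).neg).add (differentiableAt_const _))
  have hsm : ∀ (i j : Fin 2 ⊕ Fin 2), DifferentiableAt ℝ
      (fun s : ℝ => ((s:ℂ) • fromBlocks 0 0 (P s) (1:Mat2)) i j) t := fun i j => by
    simp only [Matrix.smul_apply, smul_eq_mul]
    exact ((hasDerivAt_ofReal' t).differentiableAt).mul (hFB i j)
  have hf1 : ∀ (i j : Fin 2 ⊕ Fin 2), DifferentiableAt ℝ
      (fun s : ℝ => ((x ^ 2)⁻¹ • ((s:ℂ) • fromBlocks 0 0 (P s) (1:Mat2))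
        + x⁻¹ • A1f θ0 (Q s) (P s) : Matrix (Fin 2 ⊕ Fin 2) (Fin 2 ⊕ Fin 2) ℂ) i j) t :=
      fun i j => by
    simp only [Matrix.add_apply, Matrix.smul_apply, smul_eq_mul, A1f]
    exact ((hsm i j).const_mul _).add ((hA1e i j).const_mul _)
  rw [matDeriv_add_const]
  rw [matDeriv_add _ _ t (fun i j => by
        simpa only [Matrix.smul_apply, smul_eq_mul] using (hsm i j).const_mul ((x^2)⁻¹))
      (fun i j => by
        simp only [Matrix.smul_apply, smul_eq_mul, A1f]
        exact (hA1e i j).const_mul _)]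
  rw [matDeriv_smul, matDeriv_smul, matDeriv_ofReal_smul _ _ hFB]
  rw [show (fun s : ℝ => A1f θ0 (Q s) (P s))
      = fun s => fromBlocks (Q s * P s) (Q s) (1:Mat2)
          (-(P s * Q s) + θ0 • (1:Mat2)) from rfl]
  rw [matDeriv_fromBlocks, matDeriv_fromBlocks,
    matDeriv_mul _ _ t hQd hPd, matDeriv_const, matDeriv_const,
    matDeriv_add_const,
    matDeriv_neg, matDeriv_mul _ _ t hPd hQd]
  simp only [fromBlocks_add, fromBlocks_smul, smul_zero, add_zero, zero_add]

lemma key_prod (t θ0 : ℂ) (Q P Q' P' : Mat2)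
    (e1 : t • Q' = (2:ℂ) • (Q*P*Q) - θ0 • Q + t • (1:Mat2))
    (e2 : t • P' = -((2:ℂ) • (P*Q*P)) + θ0 • P - (1:Mat2)) :
    t • (Q'*P + Q*P') = t • P - Q ∧ t • (P'*Q + P*Q') = t • P - Q := by
  constructor
  · calc t • (Q'*P + Q*P') = (t • Q')*P + Q*(t • P') := by
          rw [smul_add, smul_mul_assoc, mul_smul_comm]
    _ = ((2:ℂ) • (Q*P*Q) - θ0 • Q + t • (1:Mat2))*P
        + Q*(-((2:ℂ) • (P*Q*P)) + θ0 • P - (1:Mat2)) := by rw [e1, e2]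
    _ = t • P - Q := by
        simp only [Matrix.add_mul, Matrix.sub_mul, Matrix.mul_add, Matrix.mul_sub,
          smul_mul_assoc, mul_smul_comm, Matrix.one_mul, Matrix.mul_one, Matrix.mul_neg,
          Matrix.neg_mul, Matrix.mul_assoc]
        module
  · calc t • (P'*Q + P*Q') = (t • P')*Q + P*(t • Q') := by
          rw [smul_add, smul_mul_assoc, mul_smul_comm]
    _ = (-((2:ℂ) • (P*Q*P)) + θ0 • P - (1:Mat2))*Q
        + P*((2:ℂ) • (Q*P*Q) - θ0 • Q + t • (1:Mat2)) := by rw [e1, e2]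
    _ = t • P - Q := by
        simp only [Matrix.add_mul, Matrix.sub_mul, Matrix.mul_add, Matrix.mul_sub,
          smul_mul_assoc, mul_smul_comm, Matrix.one_mul, Matrix.mul_one, Matrix.mul_neg,
          Matrix.neg_mul, Matrix.mul_assoc]
        module

lemma sys_iff (t θ0 : ℂ) (ht : t ≠ 0) (Q P Q' P' : Mat2) :
    ((fromBlocks 0 0 (P + t • P') 1 : Matrix (Fin 2 ⊕ Fin 2) (Fin 2 ⊕ Fin 2) ℂ)
        = fromBlocks 0 0 (P - (2:ℂ) • (P*Q*P) + θ0 • P - 1) 1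
      ∧ (fromBlocks (Q'*P + Q*P') Q' 0 (-(P'*Q + P*Q'))
          : Matrix (Fin 2 ⊕ Fin 2) (Fin 2 ⊕ Fin 2) ℂ)
        = fromBlocks (P - t⁻¹ • Q) (t⁻¹ • ((2:ℂ) • (Q*P*Q) - θ0 • Q) + 1) 0 (t⁻¹ • Q - P))
    ↔ (t • Q' = (2:ℂ) • (Q*P*Q) - θ0 • Q + t • (1:Mat2)
        ∧ t • P' = -((2:ℂ) • (P*Q*P)) + θ0 • P - (1:Mat2)) := by
  constructor
  · rintro ⟨h0, h1⟩
    rw [fromBlocks_inj] at h0 h1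
    obtain ⟨-, -, h0, -⟩ := h0
    obtain ⟨-, h12, -, -⟩ := h1
    constructor
    · rw [h12, smul_add, smul_smul, mul_inv_cancel₀ ht, one_smul]
    · calc t • P' = (P + t • P') - P := by abel
      _ = (P - (2:ℂ) • (P*Q*P) + θ0 • P - 1) - P := by rw [h0]
      _ = -((2:ℂ) • (P*Q*P)) + θ0 • P - 1 := by abel
  · rintro ⟨e1, e2⟩
    obtain ⟨k1, k2⟩ := key_prod t θ0 Q P Q' P' e1 e2
    refine ⟨?_, ?_⟩ <;> rw [fromBlocks_inj]
    · exact ⟨rfl, rfl, by rw [e2]; abel, rfl⟩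
    · refine ⟨?_, ?_, rfl, ?_⟩
      · have h : Q'*P + Q*P' = t⁻¹ • (t • (Q'*P + Q*P')) := by
          rw [smul_smul, inv_mul_cancel₀ ht, one_smul]
        rw [h, k1, smul_sub, smul_smul, inv_mul_cancel₀ ht, one_smul]
      · have h : Q' = t⁻¹ • (t • Q') := by rw [smul_smul, inv_mul_cancel₀ ht, one_smul]
        rw [h, e1, smul_add, smul_smul, mul_comm t⁻¹ t, mul_inv_cancel₀ ht, one_smul]
      · have h : P'*Q + P*Q' = t⁻¹ • (t • (P'*Q + P*Q')) := by
          rw [smul_smul, inv_mul_cancel₀ ht, one_smul]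
        rw [h, k2, smul_sub, smul_smul, inv_mul_cancel₀ ht, one_smul]
        abel

end LaxAux

theorem lax_pair_11_2_2_2
    (θ0 θi2 θi3 : ℂ) (hFuchs : 2*θ0 + θi2 + θi3 = 0)
    (α β : ℝ) (h0 : (0:ℝ) ∉ Set.Ioo α β)
    (q1 q2 p1 p2 u : ℝ → ℂ)
    (hdiff : ∀ t ∈ Set.Ioo α β, DifferentiableAt ℝ q1 t ∧ DifferentiableAt ℝ q2 t ∧
      DifferentiableAt ℝ p1 t ∧ DifferentiableAt ℝ p2 t ∧ DifferentiableAt ℝ u t)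
    (hu : ∀ t ∈ Set.Ioo α β, u t ≠ 0)
    (Q P : ℝ → Matrix (Fin 2) (Fin 2) ℂ)
    (hQ : Q = Qf q1 q2 u) (hP : P = Pf p1 p2 q2 (θ0 + θi2) u) :
    -- zero curvature:  ∂A/∂t − ∂B/∂x + [A,B] = O
    (∀ t ∈ Set.Ioo α β, ∀ x : ℂ, x ≠ 0 →
        matDeriv (fun s => Afun θ0 Q P x s) t
          = -((x ^ 2)⁻¹ • B1f (P t))
            - (Afun θ0 Q P x t * Bfun Q P x t - Bfun Q P x t * Afun θ0 Q P x t))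
    ↔
    -- `tQ′ = 2QPQ − θ⁰Q + t` and `tP′ = −2PQP + θ⁰P − 1`
    ((∀ t ∈ Set.Ioo α β,
        (t : ℂ) • matDeriv Q t
          = (2:ℂ) • (Q t * P t * Q t) - θ0 • Q t + (t : ℂ) • (1 : Matrix (Fin 2) (Fin 2) ℂ)) ∧
      (∀ t ∈ Set.Ioo α β,
        (t : ℂ) • matDeriv P t
          = -((2:ℂ) • (P t * Q t * P t)) + θ0 • P t - (1 : Matrix (Fin 2) (Fin 2) ℂ))) := by
    -- entrywise differentiability of Q and P
  have hQd : ∀ t ∈ Set.Ioo α β, ∀ (i j : Fin 2),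
      DifferentiableAt ℝ (fun s => Q s i j) t := by
    intro t htI i j
    obtain ⟨h1, h2, h3, h4, h5⟩ := hdiff t htI
    subst hQ
    fin_cases i <;> fin_cases j <;>
      simp only [Qf, Matrix.cons_val', Matrix.cons_val_zero, Matrix.cons_val_one,
        Matrix.head_cons, Matrix.empty_val', Matrix.cons_val_fin_one, Matrix.head_fin_const,
        Fin.isValue] <;>
      first
        | exact h1
        | exact h5
        | exact (h2.neg).div h5 (hu t htI)
  have hPd : ∀ t ∈ Set.Ioo α β, ∀ (i j : Fin 2),
      DifferentiableAt ℝ (fun s => P s i j) t := by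
    intro t htI i j
    obtain ⟨h1, h2, h3, h4, h5⟩ := hdiff t htI
    subst hP
    fin_cases i <;> fin_cases j <;>
      simp only [Pf, Matrix.cons_val', Matrix.cons_val_zero, Matrix.cons_val_one,
        Matrix.head_cons, Matrix.empty_val', Matrix.cons_val_fin_one, Matrix.head_fin_const,
        Fin.isValue] <;>
      first
        | exact h3.div_const 2
        | exact (h4.neg).mul h5
        | exact ((h4.mul h2).sub (differentiableAt_const _)).div h5 (hu t htI)
  have hAeq : ∀ x : ℂ, (fun s => Afun θ0 Q P x s)
      = fun s : ℝ => (x ^ 2)⁻¹ • ((s:ℂ) • fromBlocks 0 0 (P s) (1:Mat2))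
          + x⁻¹ • A1f θ0 (Q s) (P s) + A2c := by
    intro x; funext s; rw [Afun, A0f_eq]
  constructor
  · intro hzc
    have main : ∀ t ∈ Set.Ioo α β,
        ((t : ℂ) • matDeriv Q t
            = (2:ℂ) • (Q t * P t * Q t) - θ0 • Q t + (t : ℂ) • (1 : Mat2))
        ∧ ((t : ℂ) • matDeriv P t
            = -((2:ℂ) • (P t * Q t * P t)) + θ0 • P t - (1 : Mat2)) := by
      intro t htI
      have htR : t ≠ 0 := fun h => h0 (h ▸ htI)
      have htC : (t:ℂ) ≠ 0 := Complex.ofReal_ne_zero.2 htR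
      have hre : ∀ x : ℂ, x ≠ 0 →
          (x ^ 2)⁻¹ • fromBlocks 0 0 (P t + (t:ℂ) • matDeriv P t) (1:Mat2)
            + x⁻¹ • fromBlocks (matDeriv Q t * P t + Q t * matDeriv P t) (matDeriv Q t) 0
                (-(matDeriv P t * Q t + P t * matDeriv Q t))
          = (x ^ 2)⁻¹ • fromBlocks 0 0
                (P t - (2:ℂ) • (P t*Q t*P t) + θ0 • P t - 1) (1:Mat2)
            + x⁻¹ • fromBlocks (P t - (t:ℂ)⁻¹ • Q t)
                ((t:ℂ)⁻¹ • ((2:ℂ) • (Q t*P t*Q t) - θ0 • Q t) + 1) 0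
                ((t:ℂ)⁻¹ • Q t - P t) := by
        intro x hx
        have h := hzc t htI x hx
        rw [hAeq x, lhs_red θ0 Q P x t (hQd t htI) (hPd t htI)] at h
        rw [show Afun θ0 Q P x t
            = (x ^ 2)⁻¹ • A0f (P t) (t:ℂ) + x⁻¹ • A1f θ0 (Q t) (P t) + A2c from rfl,
          show Bfun Q P x t = B0f (Q t) (t:ℂ) + x⁻¹ • B1f (P t) from rfl,
          rhs_red θ0 (t:ℂ) x htC hx (Q t) (P t)] at h
        exact h
      have h1 := hre 1 one_ne_zero
      have h2 := hre (-1) (by norm_num)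
      simp only [one_pow, inv_one, one_smul] at h1
      simp only [neg_one_sq, inv_one, one_smul, inv_neg, neg_smul] at h2
      set D0 := fromBlocks 0 0 (P t + (t:ℂ) • matDeriv P t) (1:Mat2) with hD0def
      set D1 := fromBlocks (matDeriv Q t * P t + Q t * matDeriv P t) (matDeriv Q t) 0
        (-(matDeriv P t * Q t + P t * matDeriv Q t)) with hD1def
      set R0 := fromBlocks 0 0 (P t - (2:ℂ) • (P t*Q t*P t) + θ0 • P t - 1) (1:Mat2)
        with hR0def
      set R1 := fromBlocks (P t - (t:ℂ)⁻¹ • Q t)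
        ((t:ℂ)⁻¹ • ((2:ℂ) • (Q t*P t*Q t) - θ0 • Q t) + 1) 0
        ((t:ℂ)⁻¹ • Q t - P t) with hR1def
      have hD0 : D0 = R0 := by
        refine smul_right_injective
          (Matrix (Fin 2 ⊕ Fin 2) (Fin 2 ⊕ Fin 2) ℂ) (two_ne_zero (α := ℂ)) ?_
        show (2:ℂ) • D0 = (2:ℂ) • R0
        rw [two_smul, two_smul]
        calc D0 + D0 = (D0 + D1) + (D0 + -D1) := by abel
        _ = (R0 + R1) + (R0 + -R1) := by rw [h1, h2]
        _ = R0 + R0 := by abel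
      have hD1 : D1 = R1 := by
        refine smul_right_injective
          (Matrix (Fin 2 ⊕ Fin 2) (Fin 2 ⊕ Fin 2) ℂ) (two_ne_zero (α := ℂ)) ?_
        show (2:ℂ) • D1 = (2:ℂ) • R1
        rw [two_smul, two_smul]
        calc D1 + D1 = (D0 + D1) - (D0 + -D1) := by abel
        _ = (R0 + R1) - (R0 + -R1) := by rw [h1, h2]
        _ = R1 + R1 := by abel
      exact (sys_iff (t:ℂ) θ0 htC (Q t) (P t) (matDeriv Q t) (matDeriv P t)).1 ⟨hD0, hD1⟩
    exact ⟨fun t h => (main t h).1, fun t h => (main t h).2⟩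
  · rintro ⟨he1, he2⟩ t htI x hx
    have htR : t ≠ 0 := fun h => h0 (h ▸ htI)
    have htC : (t:ℂ) ≠ 0 := Complex.ofReal_ne_zero.2 htR
    obtain ⟨hD0, hD1⟩ := (sys_iff (t:ℂ) θ0 htC (Q t) (P t)
      (matDeriv Q t) (matDeriv P t)).2 ⟨he1 t htI, he2 t htI⟩
    rw [hAeq x, lhs_red θ0 Q P x t (hQd t htI) (hPd t htI), hD0, hD1,
      show Afun θ0 Q P x t
          = (x ^ 2)⁻¹ • A0f (P t) (t:ℂ) + x⁻¹ • A1f θ0 (Q t) (P t) + A2c from rfl,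
      show Bfun Q P x t = B0f (Q t) (t:ℂ) + x⁻¹ • B1f (P t) from rfl,
      rhs_red θ0 (t:ℂ) x htC hx (Q t) (P t)]

end
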